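/- Alternative formula for the eigenvalue derivative: for every t ∈ (a,b), λ'(t) = ∫_a^t V'(x) u(t,x)² dx − (∂ₓu(t,a))², where ∂ₓu(t,a) denotes the spatial derivative of u(t,·) at x = a. -/

import Mathlib

open MeasureTheory Set Topology Filter

lemma aux_hasDerivAt_fderiv (u : ℝ → ℝ → ℝ) (hC1 : ContDiff ℝ 1 (Function.uncurry u))
    (s x : ℝ) :
    HasDerivAt (u s) (fderiv ℝ (Function.uncurry u) (s, x) (0, 1)) x := by
  have h1 : HasFDerivAt (Function.uncurry u) (fderiv ℝ (Function.uncurry u) (s, x)) (s, x) :=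
    (hC1.differentiable one_ne_zero (s, x)).hasFDerivAt
  have h2 : HasDerivAt (fun y : ℝ => ((s : ℝ), y)) ((0 : ℝ), (1 : ℝ)) x :=
    (hasDerivAt_const x s).prodMk (hasDerivAt_id x)
  exact h1.comp_hasDerivAt x h2

lemma aux_cont_pderiv (u : ℝ → ℝ → ℝ) (hC1 : ContDiff ℝ 1 (Function.uncurry u)) :
    Continuous (fun p : ℝ × ℝ => deriv (u p.1) p.2) := by
  have h : (fun p : ℝ × ℝ => deriv (u p.1) p.2)
      = fun p : ℝ × ℝ => fderiv ℝ (Function.uncurry u) p ((0 : ℝ), (1 : ℝ)) :=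
    funext fun p => (aux_hasDerivAt_fderiv u hC1 p.1 p.2).deriv
  rw [h]
  exact (hC1.continuous_fderiv one_ne_zero).clm_apply continuous_const

lemma aux_hasDerivAt (u : ℝ → ℝ → ℝ) (hC1 : ContDiff ℝ 1 (Function.uncurry u))
    (s x : ℝ) : HasDerivAt (u s) (deriv (u s) x) x :=
  (aux_hasDerivAt_fderiv u hC1 s x).differentiableAt.hasDerivAt

/-- alternative formula for the eigenvalue derivative:
`λ'(t) = ∫_a^t V'(x) u(t,x)² dx - (∂ₓu(t,a))²`. -/
theorem eigenvalue_derivative_formula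
    (V : ℝ → ℝ) (hV : ContDiff ℝ 1 V)
    (a b : ℝ) (hab : a < b)
    (lam : ℝ → ℝ) (hlam : ∀ t ∈ Set.Ioo a b, DifferentiableAt ℝ lam t)
    (u : ℝ → ℝ → ℝ)
    (hC1 : ContDiff ℝ 1 (Function.uncurry u))
    (huxx : Continuous (fun p : ℝ × ℝ => deriv (deriv (u p.1)) p.2))
    (hutx : Continuous (fun p : ℝ × ℝ => deriv (fun s => deriv (u s) p.2) p.1))
    (htwice : ∀ t ∈ Set.Ioo a b, ContDiffOn ℝ 2 (u t) (Set.Icc a t))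
    (heq : ∀ t ∈ Set.Ioo a b, ∀ x ∈ Set.Ioo a t,
      -(deriv (deriv (u t)) x) + V x * u t x = lam t * u t x)
    (hbca : ∀ t ∈ Set.Ioo a b, u t a = 0)
    (hbct : ∀ t ∈ Set.Ioo a b, u t t = 0)
    (hnorm : ∀ t ∈ Set.Ioo a b, (∫ x in a..t, (u t x) ^ 2) = 1)
    :
    ∀ t ∈ Set.Ioo a b,
      deriv lam t = (∫ x in a..t, deriv V x * (u t x) ^ 2) - (deriv (u t) a) ^ 2 := by
  intro t ht
  obtain ⟨hat, htb⟩ := ht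
  -- basic continuity facts
  have hu_cont : Continuous (Function.uncurry u) := hC1.continuous
  have hcd : Continuous (fun p : ℝ × ℝ => deriv (u p.1) p.2) := aux_cont_pderiv u hC1
  have hus_cont : ∀ s : ℝ, Continuous (u s) := fun s =>
    hu_cont.comp (continuous_const.prodMk continuous_id)
  have hdus_cont : ∀ s : ℝ, Continuous (deriv (u s)) := fun s =>
    hcd.comp (continuous_const.prodMk continuous_id)
  have hVd : Continuous (deriv V) := (contDiff_one_iff_deriv.mp hV).2
  have hVc : Continuous V := hV.continuous
  -- second derivative exists at interior points
  have hD2 : ∀ s ∈ Set.Ioo a b, ∀ x ∈ Set.Ioo a s,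
      HasDerivAt (deriv (u s)) (deriv (deriv (u s)) x) x := by
    intro s hs x hx
    have h2 : ContDiffOn ℝ 2 (u s) (Set.Ioo a s) :=
      (htwice s hs).mono Set.Ioo_subset_Icc_self
    have h3 : ContDiffOn ℝ 1 (deriv (u s)) (Set.Ioo a s) :=
      h2.deriv_of_isOpen isOpen_Ioo (by norm_num)
    exact ((h3.differentiableOn one_ne_zero).differentiableAt
      (isOpen_Ioo.mem_nhds hx)).hasDerivAt
  -- Step A : Pohozaev identity
  have hA : ∫ x in a..t, -(deriv V x * (u t x) ^ 2)
      = ((deriv (u t) t) ^ 2 - (V t - lam t) * (u t t) ^ 2)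
        - ((deriv (u t) a) ^ 2 - (V a - lam t) * (u t a) ^ 2) := by
    apply intervalIntegral.integral_eq_sub_of_hasDerivAt_of_le (f := fun x =>
        (deriv (u t) x) ^ 2 - (V x - lam t) * (u t x) ^ 2)
      (f' := fun x => -(deriv V x * (u t x) ^ 2)) hat.le
    · exact (((hdus_cont t).pow 2).sub
        (((hVc.sub continuous_const).mul ((hus_cont t).pow 2)))).continuousOn
    · intro x hx
      have hdd := heq t ⟨hat, htb⟩ x hx
      have h1 : HasDerivAt (fun y => (deriv (u t) y) ^ 2)
          (2 * deriv (u t) x * deriv (deriv (u t)) x) x := by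
        simpa using (hD2 t ⟨hat, htb⟩ x hx).fun_pow 2
      have h2 : HasDerivAt (fun y => (V y - lam t) * (u t y) ^ 2)
          (deriv V x * (u t x) ^ 2 + (V x - lam t) * (2 * u t x * deriv (u t) x)) x := by
        have hVx : HasDerivAt (fun y => V y - lam t) (deriv V x) x :=
          ((hV.differentiable one_ne_zero x).hasDerivAt).sub_const (lam t)
        have hux : HasDerivAt (fun y => (u t y) ^ 2) (2 * u t x * deriv (u t) x) x := by
          simpa using (aux_hasDerivAt u hC1 t x).fun_pow 2
        simpa using hVx.fun_mul hux
      have := h1.fun_sub h2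
      convert this using 1
      linear_combination (2 * deriv (u t) x) * hdd
    · exact ((hVd.mul ((hus_cont t).pow 2)).neg).intervalIntegrable a t
  have hA' : -(∫ x in a..t, deriv V x * (u t x) ^ 2)
      = (deriv (u t) t) ^ 2 - (deriv (u t) a) ^ 2 := by
    rw [← intervalIntegral.integral_neg, hA, hbca t ⟨hat, htb⟩, hbct t ⟨hat, htb⟩]
    ring
  -- Step B : Hadamard formula  deriv lam t = -(deriv (u t) t)^2
  -- Wronskian identity for s ∈ (a,t)
  have key : ∀ s ∈ Set.Ioo a t,
      (lam s - lam t) * ∫ x in a..s, u t x * u s x = -(u t s * deriv (u s) s) := by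
    intro s hs
    have hsb : s ∈ Set.Ioo a b := ⟨hs.1, hs.2.trans htb⟩
    have hfund : ∫ x in a..s, (lam s - lam t) * (u t x * u s x)
        = (u s s * deriv (u t) s - u t s * deriv (u s) s)
          - (u s a * deriv (u t) a - u t a * deriv (u s) a) := by
      apply intervalIntegral.integral_eq_sub_of_hasDerivAt_of_le (f := fun x =>
          u s x * deriv (u t) x - u t x * deriv (u s) x)
        (f' := fun x => (lam s - lam t) * (u t x * u s x)) hs.1.le
      · exact (((hus_cont s).mul (hdus_cont t)).sub
          ((hus_cont t).mul (hdus_cont s))).continuousOn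
      · intro x hx
        have hxt : x ∈ Set.Ioo a t := ⟨hx.1, hx.2.trans hs.2⟩
        have hddt := heq t ⟨hat, htb⟩ x hxt
        have hdds := heq s hsb x hx
        have h1 : HasDerivAt (fun y => u s y * deriv (u t) y)
            (deriv (u s) x * deriv (u t) x + u s x * deriv (deriv (u t)) x) x :=
          (aux_hasDerivAt u hC1 s x).mul (hD2 t ⟨hat, htb⟩ x hxt)
        have h2 : HasDerivAt (fun y => u t y * deriv (u s) y)
            (deriv (u t) x * deriv (u s) x + u t x * deriv (deriv (u s)) x) x :=
          (aux_hasDerivAt u hC1 t x).mul (hD2 s hsb x hx)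
        have := h1.fun_sub h2
        convert this using 1
        linear_combination u s x * hddt - u t x * hdds
      · exact (continuous_const.mul ((hus_cont t).mul (hus_cont s))).intervalIntegrable a s
    rw [intervalIntegral.integral_const_mul] at hfund
    rw [hfund, hbca t ⟨hat, htb⟩, hbca s hsb, hbct s hsb]
    ring
  -- the filter
  have hne : (𝓝[Set.Ioo a t] t).NeBot := by
    refine mem_closure_iff_nhdsWithin_neBot.mp ?_
    rw [closure_Ioo hat.ne]
    exact Set.right_mem_Icc.mpr hat.le
  have hle_ne : 𝓝[Set.Ioo a t] t ≤ 𝓝[≠] t :=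
    nhdsWithin_mono t fun x hx => ne_of_lt hx.2
  have hle_n : 𝓝[Set.Ioo a t] t ≤ 𝓝 t := nhdsWithin_le_nhds
  -- limits
  have hP : Filter.Tendsto (fun s => (lam s - lam t) / (s - t)) (𝓝[≠] t)
      (𝓝 (deriv lam t)) := by
    have h := hasDerivAt_iff_tendsto_slope.mp (hlam t ⟨hat, htb⟩).hasDerivAt
    rw [show slope lam t = fun s => (lam s - lam t) / (s - t) from
      funext fun s => slope_def_field lam t s] at h
    exact h
  have hR : Filter.Tendsto (fun s => (u t s - u t t) / (s - t)) (𝓝[≠] t)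
      (𝓝 (deriv (u t) t)) := by
    have h := hasDerivAt_iff_tendsto_slope.mp (aux_hasDerivAt u hC1 t t)
    rw [show slope (u t) t = fun s => (u t s - u t t) / (s - t) from
      funext fun s => slope_def_field (u t) t s] at h
    exact h
  have hS : Filter.Tendsto (fun s => deriv (u s) s) (𝓝 t) (𝓝 (deriv (u t) t)) := by
    have : Continuous fun s : ℝ => deriv (u s) s :=
      hcd.comp (continuous_id.prodMk continuous_id)
    exact this.continuousAt
  have hQ : Filter.Tendsto (fun s => ∫ x in a..s, u t x * u s x) (𝓝 t) (𝓝 1) := by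
    have hcont : Continuous fun s : ℝ => ∫ x in a..s, u t x * u s x := by
      apply intervalIntegral.continuous_parametric_intervalIntegral_of_continuous
        (f := fun s x => u t x * u s x) ?_ continuous_id
      exact ((hus_cont t).comp continuous_snd).mul hu_cont
    have hval : (∫ x in a..t, u t x * u t x) = 1 := by
      rw [← hnorm t ⟨hat, htb⟩]
      congr 1
      ext x
      ring
    have h := hcont.continuousAt (x := t)
    rw [ContinuousAt] at h
    simp only [hval] at h
    exact h
  have hT1 : Filter.Tendsto
      (fun s => ((lam s - lam t) / (s - t)) * ∫ x in a..s, u t x * u s x)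
      (𝓝[Set.Ioo a t] t) (𝓝 (deriv lam t * 1)) :=
    (hP.mono_left hle_ne).mul (hQ.mono_left hle_n)
  have hT2 : Filter.Tendsto
      (fun s => -(((u t s - u t t) / (s - t)) * deriv (u s) s))
      (𝓝[Set.Ioo a t] t) (𝓝 (-(deriv (u t) t * deriv (u t) t))) :=
    ((hR.mono_left hle_ne).mul (hS.mono_left hle_n)).neg
  have hEq : (fun s => ((lam s - lam t) / (s - t)) * ∫ x in a..s, u t x * u s x)
      =ᶠ[𝓝[Set.Ioo a t] t]
      (fun s => -(((u t s - u t t) / (s - t)) * deriv (u s) s)) := by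
    filter_upwards [self_mem_nhdsWithin] with s hs
    have hne' : s - t ≠ 0 := sub_ne_zero.mpr hs.2.ne
    rw [hbct t ⟨hat, htb⟩, sub_zero]
    have hk := key s hs
    field_simp
    linear_combination hk
  have hB : deriv lam t * 1 = -(deriv (u t) t * deriv (u t) t) :=
    tendsto_nhds_unique (hT1.congr' hEq) hT2
  -- combine
  have h1 : deriv lam t = -(deriv (u t) t) ^ 2 := by
    rw [mul_one] at hB
    rw [hB]; ring
  nlinarith [hA', h1]
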